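/- Let m ≥ 2 and let k_1, k_2, k_3 be smooth real-valued functions on a connected smooth manifold M that are pairwise distinct at every point. Suppose there are positive integers m_1, m_2, m_3 and constants C_1, C_2 such that m_1k_1 + m_2k_2 + m_3k_3 = C_1 and m_1k_1^2 + m_2k_2^2 + m_3k_3^2 = C_2 on M. If for every point and every tangent vector X in the i-th distribution X(k_i)=0, and at each point the tangent space is spanned by the three distributions, then each k_i is constant on M. (Linear algebra core: if m_2(X k_2) + m_3(X k_3) = 0 and m_2 k_2(X k_2) + m_3 k_3(X k_3) = 0 with k_2 ≠ k_3 and m_2, m_3 > 0, then X k_2 = X k_3 = 0.) -/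

import Mathlib

set_option maxHeartbeats 1000000

open Manifold Set

section Aux

lemma my_solve_core {m0 m1 m2 k0 k1 k2 a0 a1 a2 : ℝ} (hm1 : 0 < m1) (hm2 : 0 < m2)
    (hk : k1 ≠ k2) (ha0 : a0 = 0)
    (h1 : m0 * a0 + m1 * a1 + m2 * a2 = 0)
    (h2 : m0 * (k0 * a0) + m1 * (k1 * a1) + m2 * (k2 * a2) = 0) :
    a1 = 0 ∧ a2 = 0 := by
  subst ha0
  have hb : m2 * ((k2 - k1) * a2) = 0 := by linear_combination h2 - k1 * h1
  have hb2 : (k2 - k1) * a2 = 0 := by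
    rcases mul_eq_zero.1 hb with h | h
    · exact absurd h hm2.ne'
    · exact h
  have ha2 : a2 = 0 := by
    rcases mul_eq_zero.1 hb2 with h | h
    · exact absurd (sub_eq_zero.1 h) hk.symm
    · exact h
  refine ⟨?_, ha2⟩
  have : m1 * a1 = 0 := by linear_combination h1 - m2 * ha2
  rcases mul_eq_zero.1 this with h | h
  · exact absurd h hm1.ne'
  · exact h

variable {n : ℕ} {M : Type*} [TopologicalSpace M]
    [ChartedSpace (EuclideanSpace ℝ (Fin n)) M] [IsManifold (𝓡 n) (⊤ : ℕ∞) M]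

lemma my_isLocallyConstant_of_mfderiv_zero (f : M → ℝ)
    (hf : MDifferentiable (𝓡 n) 𝓘(ℝ) f)
    (h : ∀ x, mfderiv (𝓡 n) 𝓘(ℝ) f x = 0) : IsLocallyConstant f := by
  rw [IsLocallyConstant.iff_eventually_eq]
  intro x
  set e := extChartAt (𝓡 n) x with he
  have hT : IsOpen e.target := isOpen_extChartAt_target x
  set g : EuclideanSpace ℝ (Fin n) → ℝ := f ∘ e.symm with hg
  have key : ∀ w ∈ e.target, HasFDerivAt g (0 : EuclideanSpace ℝ (Fin n) →L[ℝ] ℝ) w := by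
    intro w hw
    have h1 : MDifferentiableAt 𝓘(ℝ, EuclideanSpace ℝ (Fin n)) (𝓡 n) e.symm w := by
      have := mdifferentiableWithinAt_extChartAt_symm (I := 𝓡 n) (x := x) hw
      rwa [modelWithCornersSelf_coe, Set.range_id, mdifferentiableWithinAt_univ] at this
    have h2 : MDifferentiableAt (𝓡 n) 𝓘(ℝ) f (e.symm w) := hf _
    have hcomp : mfderiv 𝓘(ℝ, EuclideanSpace ℝ (Fin n)) 𝓘(ℝ) g w =
        (mfderiv (𝓡 n) 𝓘(ℝ) f (e.symm w)).comp
          (mfderiv 𝓘(ℝ, EuclideanSpace ℝ (Fin n)) (𝓡 n) e.symm w) :=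
      mfderiv_comp w h2 h1
    have hzero : mfderiv 𝓘(ℝ, EuclideanSpace ℝ (Fin n)) 𝓘(ℝ) g w = 0 := by
      rw [hcomp, h]; rfl
    have hdiff : MDifferentiableAt 𝓘(ℝ, EuclideanSpace ℝ (Fin n)) 𝓘(ℝ) g w := h2.comp w h1
    have hfd : fderiv ℝ g w = 0 := by rw [← mfderiv_eq_fderiv]; exact hzero
    exact hfd ▸ hdiff.differentiableAt.hasFDerivAt
  have hxs : x ∈ e.source := mem_extChartAt_source x
  have hxt : e x ∈ e.target := e.map_source hxs
  obtain ⟨ε, hε, hball⟩ := Metric.isOpen_iff.1 hT _ hxt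
  have hgconst : ∀ w ∈ Metric.ball (e x) ε, g w = g (e x) := by
    intro w hw
    refine (convex_ball _ _).is_const_of_fderivWithin_eq_zero
      (fun z hz => ((key z (hball hz)).differentiableAt).differentiableWithinAt)
      (fun z hz => ?_) hw (Metric.mem_ball_self hε)
    rw [fderivWithin_of_isOpen Metric.isOpen_ball hz]
    exact (key z (hball hz)).fderiv
  have hU : IsOpen (e.source ∩ e ⁻¹' Metric.ball (e x) ε) :=
    (continuousOn_extChartAt x).isOpen_inter_preimage (isOpen_extChartAt_source x)
      Metric.isOpen_ball
  have hxU : x ∈ e.source ∩ e ⁻¹' Metric.ball (e x) ε :=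
    ⟨hxs, Metric.mem_ball_self hε⟩
  filter_upwards [hU.mem_nhds hxU] with y hy
  have h1 : f y = g (e y) := by simp [hg, e.left_inv hy.1]
  have h2 : f x = g (e x) := by simp [hg, e.left_inv hxs]
  rw [h1, h2, hgconst _ hy.2]

end Aux

theorem stmt_13 {n : ℕ} (hn : 2 ≤ n) {M : Type*} [TopologicalSpace M]
    [ChartedSpace (EuclideanSpace ℝ (Fin n)) M] [IsManifold (𝓡 n) (⊤ : ℕ∞) M]
    [ConnectedSpace M]
    (k : Fin 3 → M → ℝ) (hk : ∀ i, ContMDiff (𝓡 n) 𝓘(ℝ) (⊤ : ℕ∞) (k i))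
    (hdist : ∀ x : M, ∀ i j : Fin 3, i ≠ j → k i x ≠ k j x)
    (mult : Fin 3 → ℕ) (hmult : ∀ i, 0 < mult i) (C₁ C₂ : ℝ)
    (hC₁ : ∀ x : M, ∑ i, (mult i : ℝ) * k i x = C₁)
    (hC₂ : ∀ x : M, ∑ i, (mult i : ℝ) * (k i x) ^ 2 = C₂)
    (D : Fin 3 → (x : M) → Submodule ℝ (TangentSpace (𝓡 n) x))
    (hspan : ∀ x : M, (⨆ i, D i x) = ⊤)
    (hD : ∀ (i : Fin 3) (x : M), ∀ v ∈ D i x, mfderiv (𝓡 n) 𝓘(ℝ) (k i) x v = 0) :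
    ∀ i : Fin 3, ∃ c : ℝ, ∀ x : M, k i x = c := by
  have hmd : ∀ (j : Fin 3), MDifferentiable (𝓡 n) 𝓘(ℝ) (k j) :=
    fun j => (hk j).mdifferentiable (by simp)
  -- main claim: all mfderivs vanish
  have key : ∀ (i : Fin 3) (x : M), mfderiv (𝓡 n) 𝓘(ℝ) (k i) x = 0 := by
    intro i x
    set L : Fin 3 → (TangentSpace (𝓡 n) x →L[ℝ] ℝ) :=
      fun j => mfderiv (𝓡 n) 𝓘(ℝ) (k j) x with hL
    have hLd : ∀ j, HasMFDerivAt (𝓡 n) 𝓘(ℝ) (k j) x (L j) :=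
      fun j => (hmd j x).hasMFDerivAt
    -- first identity
    have e1 : (mult 0 : ℝ) • L 0 + ((mult 1 : ℝ) • L 1 + (mult 2 : ℝ) • L 2) = 0 := by
      have ha : HasMFDerivAt (𝓡 n) 𝓘(ℝ)
          ((mult 0 : ℝ) • k 0 + ((mult 1 : ℝ) • k 1 + (mult 2 : ℝ) • k 2)) x
          ((mult 0 : ℝ) • L 0 + ((mult 1 : ℝ) • L 1 + (mult 2 : ℝ) • L 2)) :=
        ((hLd 0).const_smul _).add (((hLd 1).const_smul _).add ((hLd 2).const_smul _))
      have hb : ((mult 0 : ℝ) • k 0 + ((mult 1 : ℝ) • k 1 + (mult 2 : ℝ) • k 2)) =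
          fun _ : M => C₁ := by
        funext y
        have := hC₁ y
        rw [Fin.sum_univ_three] at this
        simp only [Pi.add_apply, Pi.smul_apply, smul_eq_mul]
        linarith
      rw [hb] at ha
      rw [← ha.mfderiv, mfderiv_const]
      rfl
    -- second identity
    have e2 : (mult 0 : ℝ) • (k 0 x • L 0 + k 0 x • L 0) +
        ((mult 1 : ℝ) • (k 1 x • L 1 + k 1 x • L 1) +
          (mult 2 : ℝ) • (k 2 x • L 2 + k 2 x • L 2)) = 0 := by
      have ha : HasMFDerivAt (𝓡 n) 𝓘(ℝ)
          ((mult 0 : ℝ) • (k 0 * k 0) + ((mult 1 : ℝ) • (k 1 * k 1) + (mult 2 : ℝ) • (k 2 * k 2))) x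
          ((mult 0 : ℝ) • (k 0 x • L 0 + k 0 x • L 0) +
            ((mult 1 : ℝ) • (k 1 x • L 1 + k 1 x • L 1) +
              (mult 2 : ℝ) • (k 2 x • L 2 + k 2 x • L 2))) :=
        (((hLd 0).mul (hLd 0)).const_smul _).add
          ((((hLd 1).mul (hLd 1)).const_smul _).add (((hLd 2).mul (hLd 2)).const_smul _))
      have hb : ((mult 0 : ℝ) • (k 0 * k 0) +
          ((mult 1 : ℝ) • (k 1 * k 1) + (mult 2 : ℝ) • (k 2 * k 2))) = fun _ : M => C₂ := by
        funext y
        have := hC₂ y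
        rw [Fin.sum_univ_three] at this
        simp only [Pi.add_apply, Pi.smul_apply, Pi.mul_apply, smul_eq_mul]
        nlinarith [this]
      rw [hb] at ha
      rw [← ha.mfderiv, mfderiv_const]
      rfl
    -- pointwise consequence on each distribution
    have claim : ∀ (j : Fin 3) (v : TangentSpace (𝓡 n) x), v ∈ D j x →
        ∀ i' : Fin 3, L i' v = 0 := by
      intro j v hv
      have h1v : (mult 0 : ℝ) * L 0 v + (mult 1 : ℝ) * L 1 v + (mult 2 : ℝ) * L 2 v = 0 := by
        have := congrArg (fun (T : TangentSpace (𝓡 n) x →L[ℝ] ℝ) => T v) e1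
        simp only [ContinuousLinearMap.add_apply, ContinuousLinearMap.coe_smul',
          Pi.smul_apply, smul_eq_mul, ContinuousLinearMap.zero_apply] at this
        linarith
      have h2v : (mult 0 : ℝ) * (k 0 x * L 0 v) + (mult 1 : ℝ) * (k 1 x * L 1 v) +
          (mult 2 : ℝ) * (k 2 x * L 2 v) = 0 := by
        have := congrArg (fun (T : TangentSpace (𝓡 n) x →L[ℝ] ℝ) => T v) e2
        simp only [ContinuousLinearMap.add_apply, ContinuousLinearMap.coe_smul',
          Pi.smul_apply, smul_eq_mul, ContinuousLinearMap.zero_apply] at this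
        linarith
      have hm : ∀ j : Fin 3, (0 : ℝ) < (mult j : ℝ) := fun j => by exact_mod_cast hmult j
      have hjv : L j v = 0 := hD j x v hv
      have hall : L 0 v = 0 ∧ L 1 v = 0 ∧ L 2 v = 0 := by
        have hcase : ∀ a : Fin 3, a = 0 ∨ a = 1 ∨ a = 2 := by decide
        rcases hcase j with hj | hj | hj <;> subst hj
        · obtain ⟨h1, h2⟩ := my_solve_core (m0 := (mult 0 : ℝ)) (k0 := k 0 x)
            (a0 := L 0 v) (a1 := L 1 v) (a2 := L 2 v) (hm 1) (hm 2)
            (hdist x 1 2 (by decide)) hjv h1v h2v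
          exact ⟨hjv, h1, h2⟩
        · obtain ⟨h1, h2⟩ := my_solve_core (m0 := (mult 1 : ℝ)) (m1 := (mult 0 : ℝ))
            (m2 := (mult 2 : ℝ)) (k0 := k 1 x) (k1 := k 0 x) (k2 := k 2 x)
            (a0 := L 1 v) (a1 := L 0 v) (a2 := L 2 v) (hm 0) (hm 2)
            (hdist x 0 2 (by decide)) hjv
            (by linear_combination h1v) (by linear_combination h2v)
          exact ⟨h1, hjv, h2⟩
        · obtain ⟨h1, h2⟩ := my_solve_core (m0 := (mult 2 : ℝ)) (m1 := (mult 0 : ℝ))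
            (m2 := (mult 1 : ℝ)) (k0 := k 2 x) (k1 := k 0 x) (k2 := k 1 x)
            (a0 := L 2 v) (a1 := L 0 v) (a2 := L 1 v) (hm 0) (hm 1)
            (hdist x 0 1 (by decide)) hjv
            (by linear_combination h1v) (by linear_combination h2v)
          exact ⟨h1, h2, hjv⟩
      intro i'
      fin_cases i'
      · exact hall.1
      · exact hall.2.1
      · exact hall.2.2
    -- conclude L i = 0 via span
    ext v
    have hker : (⨆ j, D j x) ≤ LinearMap.ker (L i : TangentSpace (𝓡 n) x →ₗ[ℝ] ℝ) :=
      iSup_le fun j => fun w hw => by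
        simpa [LinearMap.mem_ker] using claim j w hw i
    rw [hspan x, top_le_iff] at hker
    have : v ∈ LinearMap.ker (L i : TangentSpace (𝓡 n) x →ₗ[ℝ] ℝ) := hker ▸ Submodule.mem_top
    exact (by simpa [LinearMap.mem_ker] using this : L i v = 0)
  intro i
  have hlc := my_isLocallyConstant_of_mfderiv_zero (k i) (hmd i) (key i)
  obtain ⟨x₀⟩ := (inferInstance : Nonempty M)
  exact ⟨k i x₀, fun x => hlc.apply_eq_of_preconnectedSpace x x₀⟩
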